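/- Let ℓ ≥ 2 and r_1, ..., r_ℓ be positive integers. In the Type-I tree G₁ with colouring c(v_{i,j}) = i, the third chromatic Zagreb index equals (r_1 − 1) + ∑_{i=2}^ℓ r_i·(i − 1). -/

import Mathlib

/-- Vertices v_{i,j}, 1 ≤ i ≤ ℓ, 1 ≤ j ≤ r_i, encoded as ⟨i,j⟩ : (i : Fin ℓ) × Fin (r (i+1)). -/
def ClusterVert (ℓ : ℕ) (r : ℕ → ℕ) : Type := (i : Fin ℓ) × Fin (r (i.val + 1))

instance (ℓ : ℕ) (r : ℕ → ℕ) : Fintype (ClusterVert ℓ r) :=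
  inferInstanceAs (Fintype ((i : Fin ℓ) × Fin (r (i.val + 1))))

instance (ℓ : ℕ) (r : ℕ → ℕ) : DecidableEq (ClusterVert ℓ r) :=
  inferInstanceAs (DecidableEq ((i : Fin ℓ) × Fin (r (i.val + 1))))

/-- Type-I edges: v_{1,1}v_{j,k} for 2 ≤ j ≤ ℓ, and v_{1,i}v_{2,1} for 2 ≤ i ≤ r_1. -/
def typeIRel (ℓ : ℕ) (r : ℕ → ℕ) (a b : ClusterVert ℓ r) : Prop :=
  (a.1.val = 0 ∧ a.2.val = 0 ∧ b.1.val ≠ 0) ∨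
  (a.1.val = 0 ∧ a.2.val ≠ 0 ∧ b.1.val = 1 ∧ b.2.val = 0)

instance (ℓ : ℕ) (r : ℕ → ℕ) : DecidableRel (typeIRel ℓ r) := fun a b => by
  unfold typeIRel; infer_instance

/-- The Type-I graphical embodiment G₁. -/
def typeIGraph (ℓ : ℕ) (r : ℕ → ℕ) : SimpleGraph (ClusterVert ℓ r) :=
  SimpleGraph.fromRel (typeIRel ℓ r)

instance (ℓ : ℕ) (r : ℕ → ℕ) : DecidableRel (typeIGraph ℓ r).Adj := fun a b =>
  decidable_of_iff _ (SimpleGraph.fromRel_adj (typeIRel ℓ r) a b).symm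

section Aux

variable {ℓ : ℕ} {r : ℕ → ℕ}

lemma cv_sum (f : ClusterVert ℓ r → ℕ) :
    ∑ u : ClusterVert ℓ r, f u = ∑ i : Fin ℓ, ∑ j : Fin (r (i.val + 1)), f ⟨i, j⟩ := by
  show ∑ u ∈ (Finset.univ : Finset ((i : Fin ℓ) × Fin (r (i.val + 1)))), f u = _
  exact Fintype.sum_sigma f

lemma rel_ne {a b : ClusterVert ℓ r} (h : typeIRel ℓ r a b) : a ≠ b := by
  rintro rfl
  rcases h with ⟨h1, h2, h3⟩ | ⟨h1, h2, h3, h4⟩ <;> omega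

lemma rel_asymm {a b : ClusterVert ℓ r} (h : typeIRel ℓ r a b) : ¬ typeIRel ℓ r b a := by
  rcases h with ⟨h1, h2, h3⟩ | ⟨h1, h2, h3, h4⟩ <;>
    rintro (⟨g1, g2, g3⟩ | ⟨g1, g2, g3, g4⟩) <;> omega

lemma adj_ite (u v : ClusterVert ℓ r) (w : ℕ) :
    (if (typeIGraph ℓ r).Adj u v then w else 0) =
      (if typeIRel ℓ r u v then w else 0) + (if typeIRel ℓ r v u then w else 0) := by
  have hadj : (typeIGraph ℓ r).Adj u v ↔ (typeIRel ℓ r u v ∨ typeIRel ℓ r v u) := by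
    rw [typeIGraph, SimpleGraph.fromRel_adj]
    constructor
    · rintro ⟨-, h⟩; exact h
    · intro h; exact ⟨h.elim rel_ne fun h' => (rel_ne h').symm, h⟩
  by_cases h1 : typeIRel ℓ r u v
  · have h2 := rel_asymm h1
    simp [hadj, h1, h2]
  · by_cases h2 : typeIRel ℓ r v u <;> simp [hadj, h1, h2]

lemma fin_sum_eq_zero (n : ℕ) (hn : 0 < n) :
    ∑ j : Fin n, (if j.val = 0 then (1 : ℕ) else 0) = 1 := by
  obtain ⟨m, rfl⟩ := Nat.exists_eq_succ_of_ne_zero hn.ne'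
  rw [Fin.sum_univ_succ]
  simp

lemma fin_sum_ne_zero (n : ℕ) :
    ∑ j : Fin n, (if j.val ≠ 0 then (1 : ℕ) else 0) = n - 1 := by
  cases n with
  | zero => simp
  | succ m => rw [Fin.sum_univ_succ]; simp [Fin.val_succ]

lemma fin_sum_single {ℓ : ℕ} (t : ℕ) (ht : t < ℓ) (g : Fin ℓ → ℕ) :
    ∑ i : Fin ℓ, (if i.val = t then g i else 0) = g ⟨t, ht⟩ := by
  rw [Finset.sum_eq_single_of_mem ⟨t, ht⟩ (Finset.mem_univ _)]
  · simp
  · intro b _ hb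
    rw [if_neg fun h => hb (Fin.ext h)]

lemma sum_ite_and_left {n : ℕ} (P : Prop) [Decidable P] (Q : Fin n → Prop)
    [DecidablePred Q] (c : Fin n → ℕ) :
    ∑ j : Fin n, (if P ∧ Q j then c j else 0)
      = if P then (∑ j : Fin n, if Q j then c j else 0) else 0 := by
  by_cases hP : P <;> simp [hP]

lemma sum_range_icc (r : ℕ → ℕ) (n : ℕ) :
    ∑ k ∈ Finset.range n, r (k + 1) * (if k ≠ 0 then k else 0)
      = ∑ i ∈ Finset.Icc 2 n, r i * (i - 1) := by
  induction n with
  | zero => simp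
  | succ n ih =>
    rw [Finset.sum_range_succ, ih]
    rcases Nat.eq_zero_or_pos n with rfl | hn
    · simp
    · rw [Finset.sum_Icc_succ_top (by omega)]
      simp [hn.ne']

instance cvRelDec (i : Fin ℓ) (j : Fin (r (i.val + 1))) (i' : Fin ℓ)
    (j' : Fin (r (i'.val + 1))) : Decidable (typeIRel ℓ r ⟨i, j⟩ ⟨i', j'⟩) :=
  (inferInstance : DecidableRel (typeIRel ℓ r)) _ _

end Aux


/-- In the Type-I tree with colouring c(v_{i,j}) = i, the third chromatic Zagreb index
∑_{uv∈E} |c(u)−c(v)| (computed as half of the sum over ordered adjacent pairs) equals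
(r_1 − 1) + ∑_{i=2}^ℓ r_i·(i−1). -/
theorem stmt_13 (ℓ : ℕ) (hℓ : 2 ≤ ℓ) (r : ℕ → ℕ) (hr : ∀ i ∈ Finset.Icc 1 ℓ, 0 < r i) :
    (∑ u : ClusterVert ℓ r, ∑ v : ClusterVert ℓ r,
        if (typeIGraph ℓ r).Adj u v then
          ((u.1.val : ℤ) + 1 - ((v.1.val : ℤ) + 1)).natAbs else 0) =
      2 * ((r 1 - 1) + ∑ i ∈ Finset.Icc 2 ℓ, r i * (i - 1)) := by
  have hr1 : 0 < r 1 := hr 1 (Finset.mem_Icc.mpr ⟨le_refl 1, by omega⟩)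
  have hr2 : 0 < r 2 := hr 2 (Finset.mem_Icc.mpr ⟨by omega, hℓ⟩)
  have h1ℓ : 1 < ℓ := hℓ
  have h0ℓ : 0 < ℓ := by omega
  have step1 : (∑ u : ClusterVert ℓ r, ∑ v : ClusterVert ℓ r,
        if (typeIGraph ℓ r).Adj u v then
          ((u.1.val : ℤ) + 1 - ((v.1.val : ℤ) + 1)).natAbs else 0)
      = 2 * (∑ u : ClusterVert ℓ r, ∑ v : ClusterVert ℓ r,
          if typeIRel ℓ r u v then
            ((u.1.val : ℤ) + 1 - ((v.1.val : ℤ) + 1)).natAbs else 0) := by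
    have key : ∀ u v : ClusterVert ℓ r,
        (if (typeIGraph ℓ r).Adj u v then
          ((u.1.val : ℤ) + 1 - ((v.1.val : ℤ) + 1)).natAbs else 0)
        = (if typeIRel ℓ r u v then
            ((u.1.val : ℤ) + 1 - ((v.1.val : ℤ) + 1)).natAbs else 0)
          + (if typeIRel ℓ r v u then
            ((u.1.val : ℤ) + 1 - ((v.1.val : ℤ) + 1)).natAbs else 0) :=
      fun u v => adj_ite u v _
    simp_rw [key, Finset.sum_add_distrib]
    have swap : (∑ u : ClusterVert ℓ r, ∑ v : ClusterVert ℓ r,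
        if typeIRel ℓ r v u then
          ((u.1.val : ℤ) + 1 - ((v.1.val : ℤ) + 1)).natAbs else 0)
      = (∑ u : ClusterVert ℓ r, ∑ v : ClusterVert ℓ r,
        if typeIRel ℓ r u v then
          ((u.1.val : ℤ) + 1 - ((v.1.val : ℤ) + 1)).natAbs else 0) := by
      rw [Finset.sum_comm]
      refine Finset.sum_congr rfl fun a _ => Finset.sum_congr rfl fun b _ => ?_
      split_ifs with h
      · omega
      · rfl
    rw [swap, two_mul]
  rw [step1]
  congr 1
  -- compute S
  rw [cv_sum]
  simp_rw [cv_sum]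
  have key : ∀ (i : Fin ℓ) (j : Fin (r (i.val + 1))) (i' : Fin ℓ) (j' : Fin (r (i'.val + 1))),
      (if typeIRel ℓ r ⟨i, j⟩ ⟨i', j'⟩ then
          (((⟨i, j⟩ : ClusterVert ℓ r).1.val : ℤ) + 1
            - (((⟨i', j'⟩ : ClusterVert ℓ r).1.val : ℤ) + 1)).natAbs else 0)
      = (if i.val = 0 ∧ j.val ≠ 0 then 1 else 0) * (if i'.val = 1 ∧ j'.val = 0 then 1 else 0)
        + (if i.val = 0 ∧ j.val = 0 then 1 else 0) * (if i'.val ≠ 0 then i'.val else 0) := by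
    intro i j i' j'
    show (if typeIRel ℓ r ⟨i, j⟩ ⟨i', j'⟩ then ((i.val : ℤ) + 1 - ((i'.val : ℤ) + 1)).natAbs else 0) = _
    rcases em (typeIRel ℓ r ⟨i, j⟩ ⟨i', j'⟩) with hc | hc
    · rw [if_pos hc]; unfold typeIRel at hc; dsimp only at hc; split_ifs <;> omega
    · rw [if_neg hc]; unfold typeIRel at hc; dsimp only at hc; split_ifs <;> omega
  simp_rw [key, Finset.sum_add_distrib, ← Finset.mul_sum, ← Finset.sum_mul]
  simp_rw [sum_ite_and_left]
  have G1 : ∑ i : Fin ℓ, (if i.val = 0 then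
      (∑ j : Fin (r (i.val + 1)), if j.val ≠ 0 then (1 : ℕ) else 0) else 0) = r 1 - 1 := by
    rw [fin_sum_single 0 h0ℓ
      (fun i => ∑ j : Fin (r (i.val + 1)), if j.val ≠ 0 then (1 : ℕ) else 0)]
    exact fin_sum_ne_zero (r 1)
  have G2 : ∑ i : Fin ℓ, (if i.val = 1 then
      (∑ j : Fin (r (i.val + 1)), if j.val = 0 then (1 : ℕ) else 0) else 0) = 1 := by
    rw [fin_sum_single 1 h1ℓ
      (fun i => ∑ j : Fin (r (i.val + 1)), if j.val = 0 then (1 : ℕ) else 0)]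
    exact fin_sum_eq_zero (r 2) hr2
  have G3 : ∑ i : Fin ℓ, (if i.val = 0 then
      (∑ j : Fin (r (i.val + 1)), if j.val = 0 then (1 : ℕ) else 0) else 0) = 1 := by
    rw [fin_sum_single 0 h0ℓ
      (fun i => ∑ j : Fin (r (i.val + 1)), if j.val = 0 then (1 : ℕ) else 0)]
    exact fin_sum_eq_zero (r 1) hr1
  have G4 : ∑ i : Fin ℓ, ∑ _j : Fin (r (i.val + 1)), (if i.val ≠ 0 then (i.val : ℕ) else 0)
      = ∑ i ∈ Finset.Icc 2 ℓ, r i * (i - 1) := by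
    simp_rw [Finset.sum_const, Finset.card_univ, Fintype.card_fin, smul_eq_mul]
    rw [Fin.sum_univ_eq_sum_range (fun k => r (k + 1) * (if k ≠ 0 then k else 0)) ℓ]
    exact sum_range_icc r ℓ
  rw [G1, G2, G3, G4]
  rw [mul_one, one_mul]
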